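/- If X is a set of n×n ASMs with |X| ≥ 2, then every edge of the doubly directed graph G(F(X)) is contained in a cycle; equivalently, every connected component of G(F(X)) is 2-edge-connected. -/

import Mathlib

open scoped BigOperators
open scoped Classical

namespace ASMPaper

variable {n : ℕ}

/-- Partial row sum `W_{ij} = ∑_{j' ≤ j} a_{i j'}`. -/
def rowPartial (A : Matrix (Fin n) (Fin n) ℝ) (i j : Fin n) : ℝ :=
  ∑ j' ∈ Finset.univ.filter (fun j' : Fin n => j' ≤ j), A i j'

/-- Partial column sum `N_{ij} = ∑_{i' ≤ i} a_{i' j}`. -/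
def colPartial (A : Matrix (Fin n) (Fin n) ℝ) (i j : Fin n) : ℝ :=
  ∑ i' ∈ Finset.univ.filter (fun i' : Fin n => i' ≤ i), A i' j

/-- An alternating sign matrix: entries in {0,1,-1}, rows and columns sum to 1,
nonzero entries alternating in sign along rows and columns (equivalently, all
partial row and column sums lie in {0,1}). -/
def IsASM (A : Matrix (Fin n) (Fin n) ℝ) : Prop :=
  (∀ i j, A i j = 0 ∨ A i j = 1 ∨ A i j = -1) ∧
  (∀ i j, rowPartial A i j = 0 ∨ rowPartial A i j = 1) ∧
  (∀ i j, colPartial A i j = 0 ∨ colPartial A i j = 1) ∧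
  (∀ i, ∑ j, A i j = 1) ∧
  (∀ j, ∑ i, A i j = 1)

/-- The ASM polytope: convex hull of the `n × n` alternating sign matrices. -/
def ASMPolytope (n : ℕ) : Set (Matrix (Fin n) (Fin n) ℝ) :=
  convexHull ℝ {A : Matrix (Fin n) (Fin n) ℝ | IsASM A}

/-- A face of a convex set: a convex extreme subset. -/
def IsFaceOf (F P : Set (Matrix (Fin n) (Fin n) ℝ)) : Prop :=
  IsExtreme ℝ P F ∧ Convex ℝ F

/-- A facet: a nonempty face of dimension one less. -/
def IsFacetOf (G F : Set (Matrix (Fin n) (Fin n) ℝ)) : Prop :=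
  IsFaceOf G F ∧ G.Nonempty ∧
    Module.finrank ℝ (vectorSpan ℝ G) + 1 = Module.finrank ℝ (vectorSpan ℝ F)

/-- The ASMs (vertices) belonging to a face `F`. -/
def faceASMs (F : Set (Matrix (Fin n) (Fin n) ℝ)) : Set (Matrix (Fin n) (Fin n) ℝ) :=
  {A | A ∈ F ∧ IsASM A}

/-- `A` and `B` are estranged in `F` if no proper face of `F` contains both. -/
def Estranged (F : Set (Matrix (Fin n) (Fin n) ℝ)) (A B : Matrix (Fin n) (Fin n) ℝ) : Prop :=
  ∀ F', IsFaceOf F' F → F' ≠ F → ¬(A ∈ F' ∧ B ∈ F')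

/-- The doubly directed graph of a set `X` of ASMs: grid vertices `(i,j)`, with an
(undirected) edge between orthogonally adjacent grid vertices whenever the
corresponding grid edge receives both orientations among the simple flow grids of
members of `X` (the orientation of a grid edge in the simple flow grid of `A` is
determined by the relevant partial sum of `A`). -/
def ddGraph (X : Set (Matrix (Fin n) (Fin n) ℝ)) : SimpleGraph (Fin n × Fin n) where
  Adj v w :=
    (v.1 = w.1 ∧ ((v.2 : ℕ) + 1 = (w.2 : ℕ) ∨ (w.2 : ℕ) + 1 = (v.2 : ℕ)) ∧
      ∃ A ∈ X, ∃ B ∈ X, rowPartial A v.1 (min v.2 w.2) ≠ rowPartial B v.1 (min v.2 w.2)) ∨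
    (v.2 = w.2 ∧ ((v.1 : ℕ) + 1 = (w.1 : ℕ) ∨ (w.1 : ℕ) + 1 = (v.1 : ℕ)) ∧
      ∃ A ∈ X, ∃ B ∈ X, colPartial A (min v.1 w.1) v.2 ≠ colPartial B (min v.1 w.1) v.2)
  symm := by
    constructor
    rintro v w (⟨h1, h2, h3⟩ | ⟨h1, h2, h3⟩)
    · exact Or.inl ⟨h1.symm, h2.symm, by rw [min_comm, ← h1]; exact h3⟩
    · exact Or.inr ⟨h1.symm, h2.symm, by rw [min_comm, ← h1]; exact h3⟩
  loopless := by
    constructor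
    rintro v (⟨-, h2, -⟩ | ⟨-, h2, -⟩) <;> rcases h2 with h | h <;> omega

/-- Degree of a grid vertex in the doubly directed graph. -/
noncomputable def ddDegree (X : Set (Matrix (Fin n) (Fin n) ℝ)) (v : Fin n × Fin n) : ℕ :=
  ((ddGraph X).neighborSet v).ncard

/-- The (non-isolated) vertices of the doubly directed graph. -/
def ddSupport (X : Set (Matrix (Fin n) (Fin n) ℝ)) : Set (Fin n × Fin n) :=
  {v | ∃ w, (ddGraph X).Adj v w}

/-- The doubly directed graph is connected (on its support). -/
def DDConnected (X : Set (Matrix (Fin n) (Fin n) ℝ)) : Prop :=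
  ∀ v ∈ ddSupport X, ∀ w ∈ ddSupport X, (ddGraph X).Reachable v w

lemma rowPartial_succ (A : Matrix (Fin n) (Fin n) ℝ) (i : Fin n) {l j : Fin n}
    (h : (l : ℕ) + 1 = (j : ℕ)) : rowPartial A i j = rowPartial A i l + A i j := by
  unfold rowPartial
  have hs : Finset.univ.filter (fun j' : Fin n => j' ≤ j)
      = insert j (Finset.univ.filter (fun j' : Fin n => j' ≤ l)) := by
    ext x
    simp only [Finset.mem_filter, Finset.mem_univ, true_and, Finset.mem_insert, Fin.le_def,
      Fin.ext_iff]
    omega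
  rw [hs, Finset.sum_insert (by simp only [Finset.mem_filter, Finset.mem_univ, true_and, Fin.le_def]; omega)]
  ring

lemma rowPartial_zero (A : Matrix (Fin n) (Fin n) ℝ) (i : Fin n) {j : Fin n}
    (h : (j : ℕ) = 0) : rowPartial A i j = A i j := by
  unfold rowPartial
  have hs : Finset.univ.filter (fun j' : Fin n => j' ≤ j) = {j} := by
    ext x
    simp only [Finset.mem_filter, Finset.mem_univ, true_and, Finset.mem_singleton, Fin.le_def,
      Fin.ext_iff]
    omega
  rw [hs, Finset.sum_singleton]

lemma rowPartial_last (A : Matrix (Fin n) (Fin n) ℝ) (hA : IsASM A) (i : Fin n) {j : Fin n}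
    (h : (j : ℕ) + 1 = n) : rowPartial A i j = 1 := by
  unfold rowPartial
  have hs : Finset.univ.filter (fun j' : Fin n => j' ≤ j) = Finset.univ := by
    ext x
    simp only [Finset.mem_filter, Finset.mem_univ, true_and, iff_true, Fin.le_def]
    omega
  rw [hs]
  exact hA.2.2.2.1 i

lemma colPartial_succ (A : Matrix (Fin n) (Fin n) ℝ) (j : Fin n) {l i : Fin n}
    (h : (l : ℕ) + 1 = (i : ℕ)) : colPartial A i j = colPartial A l j + A i j := by
  unfold colPartial
  have hs : Finset.univ.filter (fun i' : Fin n => i' ≤ i)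
      = insert i (Finset.univ.filter (fun i' : Fin n => i' ≤ l)) := by
    ext x
    simp only [Finset.mem_filter, Finset.mem_univ, true_and, Finset.mem_insert, Fin.le_def,
      Fin.ext_iff]
    omega
  rw [hs, Finset.sum_insert (by simp only [Finset.mem_filter, Finset.mem_univ, true_and, Fin.le_def]; omega)]
  ring

lemma colPartial_zero (A : Matrix (Fin n) (Fin n) ℝ) (j : Fin n) {i : Fin n}
    (h : (i : ℕ) = 0) : colPartial A i j = A i j := by
  unfold colPartial
  have hs : Finset.univ.filter (fun i' : Fin n => i' ≤ i) = {i} := by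
    ext x
    simp only [Finset.mem_filter, Finset.mem_univ, true_and, Finset.mem_singleton, Fin.le_def,
      Fin.ext_iff]
    omega
  rw [hs, Finset.sum_singleton]

lemma colPartial_last (A : Matrix (Fin n) (Fin n) ℝ) (hA : IsASM A) (j : Fin n) {i : Fin n}
    (h : (i : ℕ) + 1 = n) : colPartial A i j = 1 := by
  unfold colPartial
  have hs : Finset.univ.filter (fun i' : Fin n => i' ≤ i) = Finset.univ := by
    ext x
    simp only [Finset.mem_filter, Finset.mem_univ, true_and, iff_true, Fin.le_def]
    omega
  rw [hs]
  exact hA.2.2.2.2 j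

lemma parity_aux {p q t s : ℝ}
    (hp : p = 0 ∨ p = 1 ∨ p = -1) (hq : q = 0 ∨ q = 1 ∨ q = -1)
    (ht : t = 0 ∨ t = 1 ∨ t = -1) (hs : s = 0 ∨ s = 1 ∨ s = -1)
    (h : q - p = s - t) :
    Even ((if p ≠ 0 then 1 else 0) + (if q ≠ 0 then 1 else 0)
      + (if t ≠ 0 then 1 else 0) + (if s ≠ 0 then 1 else 0) : ℕ) := by
  rcases hp with rfl | rfl | rfl <;> rcases hq with rfl | rfl | rfl <;>
    rcases ht with rfl | rfl | rfl <;> rcases hs with rfl | rfl | rfl <;>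
    norm_num at h <;> norm_num


open SimpleGraph in
theorem reach_del {V : Type*} [Fintype V] (G : SimpleGraph V)
    (hdeg : ∀ u, Even (G.degree u)) {v w : V} (h : G.Adj v w) :
    (G \ fromEdgeSet {s(v, w)}).Reachable v w := by
  by_contra hr
  set G' := G \ fromEdgeSet {s(v, w)} with hG'
  set C : Set V := {u | G'.Reachable v u} with hC
  set G'' : SimpleGraph V := {
    Adj := fun a b => G'.Adj a b ∧ a ∈ C ∧ b ∈ C
    symm := by constructor; rintro a b ⟨h1, h2, h3⟩; exact ⟨h1.symm, h3, h2⟩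
    loopless := by constructor; rintro a ⟨h1, -, -⟩; exact G'.loopless.irrefl a h1 } with hG''
  have hadjC : ∀ a b, a ∈ C → G'.Adj a b → b ∈ C := by
    intro a b ha hab
    exact ha.trans hab.reachable
  have hvC : v ∈ C := Reachable.refl v
  have hwC : w ∉ C := hr
  have hG'adj : ∀ a b, G'.Adj a b ↔ G.Adj a b ∧ ¬(a = v ∧ b = w) ∧ ¬(a = w ∧ b = v) := by
    intro a b
    rw [hG']
    simp only [sdiff_adj, fromEdgeSet_adj, Set.mem_singleton_iff, Sym2.eq, Sym2.rel_iff',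
      Prod.mk.injEq, Prod.swap_prod_mk, not_or, not_and]
    constructor
    · rintro ⟨h1, h2⟩
      have := h1.ne
      tauto
    · rintro ⟨h1, h2, h3⟩
      have := h1.ne
      tauto
  have hnbV : G'.neighborFinset v = (G.neighborFinset v).erase w := by
    ext b
    simp only [mem_neighborFinset, Finset.mem_erase, hG'adj]
    have := h.ne
    tauto
  have hwv : w ∈ G.neighborFinset v := by simp [mem_neighborFinset, h]
  have hdegv : Odd (G'.degree v) := by
    have h1 : G'.degree v = G.degree v - 1 := by
      rw [degree, hnbV, Finset.card_erase_of_mem hwv]; rfl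
    have h2 := hdeg v
    have h3 : 1 ≤ G.degree v := Finset.card_pos.mpr ⟨w, hwv⟩
    rw [h1]
    rcases h2 with ⟨k, hk⟩
    exact ⟨k - 1, by omega⟩
  have hdegu : ∀ u, u ≠ v → u ≠ w → G'.degree u = G.degree u := by
    intro u hu1 hu2
    have : G'.neighborFinset u = G.neighborFinset u := by
      ext b
      simp only [mem_neighborFinset, hG'adj]
      tauto
    rw [degree, this]; rfl
  have hG''nb : ∀ u ∈ C, G''.degree u = G'.degree u := by
    intro u hu
    have : G''.neighborFinset u = G'.neighborFinset u := by
      ext b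
      simp only [mem_neighborFinset, hG'']
      exact ⟨fun ⟨h1, _, _⟩ => h1, fun h1 => ⟨h1, hu, hadjC u b hu h1⟩⟩
    rw [degree, this]; rfl
  have hG''nb0 : ∀ u, u ∉ C → G''.degree u = 0 := by
    intro u hu
    have : G''.neighborFinset u = ∅ := by
      ext b
      simp only [mem_neighborFinset, hG'', Finset.notMem_empty, iff_false]
      rintro ⟨-, h2, -⟩
      exact hu h2
    rw [degree, this]; rfl
  have key : Finset.univ.filter (fun u => Odd (G''.degree u)) = {v} := by
    ext u
    simp only [Finset.mem_filter, Finset.mem_univ, true_and, Finset.mem_singleton]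
    constructor
    · intro hodd
      by_contra hne
      by_cases huC : u ∈ C
      · have hne2 : u ≠ w := fun hh => hwC (hh ▸ huC)
        rw [hG''nb u huC, hdegu u hne hne2] at hodd
        exact (Nat.not_even_iff_odd.mpr hodd) (hdeg u)
      · rw [hG''nb0 u huC] at hodd
        simp at hodd
    · intro hu
      rw [hu, hG''nb v hvC]
      exact hdegv
  have : Even (Finset.univ.filter (fun u => Odd (G''.degree u))).card := by
    convert G''.even_card_odd_degree_vertices
  rw [key] at this
  simp at this

lemma pair_exists_ne {A B : Matrix (Fin n) (Fin n) ℝ} {f : Matrix (Fin n) (Fin n) ℝ → ℝ} :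
    (∃ A' ∈ ({A, B} : Set (Matrix (Fin n) (Fin n) ℝ)), ∃ B' ∈ ({A, B} : Set (Matrix (Fin n) (Fin n) ℝ)),
      f A' ≠ f B') ↔ f A ≠ f B := by
  constructor
  · rintro ⟨a, ha, b, hb, hab⟩
    rcases ha with rfl | rfl <;> rcases hb with rfl | rfl
    · exact absurd rfl hab
    · exact hab
    · exact hab.symm
    · exact absurd rfl hab
  · intro hab
    exact ⟨A, Or.inl rfl, B, Or.inr rfl, hab⟩

lemma pair_adj_iff {A B : Matrix (Fin n) (Fin n) ℝ} {v w : Fin n × Fin n} :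
    (ddGraph {A, B}).Adj v w ↔
    (v.1 = w.1 ∧ ((v.2 : ℕ) + 1 = (w.2 : ℕ) ∨ (w.2 : ℕ) + 1 = (v.2 : ℕ)) ∧
      rowPartial A v.1 (min v.2 w.2) ≠ rowPartial B v.1 (min v.2 w.2)) ∨
    (v.2 = w.2 ∧ ((v.1 : ℕ) + 1 = (w.1 : ℕ) ∨ (w.1 : ℕ) + 1 = (v.1 : ℕ)) ∧
      colPartial A (min v.1 w.1) v.2 ≠ colPartial B (min v.1 w.1) v.2) := by
  show (_ ∨ _) ↔ _
  rw [pair_exists_ne (f := fun M => rowPartial M v.1 (min v.2 w.2)),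
    pair_exists_ne (f := fun M => colPartial M (min v.1 w.1) v.2)]

lemma even_degree_pair {A B : Matrix (Fin n) (Fin n) ℝ} (hA : IsASM A) (hB : IsASM B)
    (v : Fin n × Fin n) : Even ((ddGraph ({A, B} : Set (Matrix (Fin n) (Fin n) ℝ))).degree v) := by
  obtain ⟨i, j⟩ := v
  set q : ℝ := rowPartial A i j - rowPartial B i j with hq_def
  set s : ℝ := colPartial A i j - colPartial B i j with hs_def
  set d : ℝ := A i j - B i j with hd_def
  set p : ℝ := q - d with hp_def
  set t : ℝ := s - d with ht_def
  -- adjacency characterization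
  have adj_iff : ∀ w : Fin n × Fin n, (ddGraph ({A, B} : Set (Matrix (Fin n) (Fin n) ℝ))).Adj (i, j) w ↔
      ((w.1 = i ∧ (w.2 : ℕ) + 1 = (j : ℕ) ∧ p ≠ 0) ∨
       (w.1 = i ∧ (j : ℕ) + 1 = (w.2 : ℕ) ∧ q ≠ 0) ∨
       (w.2 = j ∧ (w.1 : ℕ) + 1 = (i : ℕ) ∧ t ≠ 0) ∨
       (w.2 = j ∧ (i : ℕ) + 1 = (w.1 : ℕ) ∧ s ≠ 0)) := by
    intro w
    rw [pair_adj_iff]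
    constructor
    · rintro (⟨h1, h2 | h2, h3⟩ | ⟨h1, h2 | h2, h3⟩)
      · -- right : min j w.2 = j
        have hm : min (i, j).2 w.2 = j := by
          apply min_eq_left; rw [Fin.le_def]; omega
        rw [hm] at h3
        exact Or.inr (Or.inl ⟨h1.symm, h2, sub_ne_zero.mpr h3⟩)
      · -- left : min j w.2 = w.2
        have hm : min (i, j).2 w.2 = w.2 := by
          apply min_eq_right; rw [Fin.le_def]; omega
        rw [hm] at h3
        have e1 := rowPartial_succ A i h2
        have e2 := rowPartial_succ B i h2
        have : rowPartial A i w.2 - rowPartial B i w.2 = p := by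
          rw [hp_def, hq_def, hd_def, e1, e2]; ring
        exact Or.inl ⟨h1.symm, h2, by rw [← this]; exact sub_ne_zero.mpr h3⟩
      · have hm : min (i, j).1 w.1 = i := by
          apply min_eq_left; rw [Fin.le_def]; omega
        rw [hm] at h3
        exact Or.inr (Or.inr (Or.inr ⟨h1.symm, h2, sub_ne_zero.mpr h3⟩))
      · have hm : min (i, j).1 w.1 = w.1 := by
          apply min_eq_right; rw [Fin.le_def]; omega
        rw [hm] at h3
        have e1 := colPartial_succ A j h2
        have e2 := colPartial_succ B j h2
        have : colPartial A w.1 j - colPartial B w.1 j = t := by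
          rw [ht_def, hs_def, hd_def, e1, e2]; ring
        exact Or.inr (Or.inr (Or.inl ⟨h1.symm, h2, by rw [← this]; exact sub_ne_zero.mpr h3⟩))
    · rintro (⟨h1, h2, h3⟩ | ⟨h1, h2, h3⟩ | ⟨h1, h2, h3⟩ | ⟨h1, h2, h3⟩)
      · have hm : min (i, j).2 w.2 = w.2 := by
          apply min_eq_right
          show w.2 ≤ j
          rw [Fin.le_def]; omega
        have e1 := rowPartial_succ A i h2
        have e2 := rowPartial_succ B i h2
        have he : rowPartial A i w.2 - rowPartial B i w.2 = p := by
          rw [hp_def, hq_def, hd_def, e1, e2]; ring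
        exact Or.inl ⟨h1.symm, Or.inr h2, by rw [hm]; exact sub_ne_zero.mp (he ▸ h3)⟩
      · have hm : min (i, j).2 w.2 = j := by
          apply min_eq_left
          show j ≤ w.2
          rw [Fin.le_def]; omega
        exact Or.inl ⟨h1.symm, Or.inl h2, by rw [hm]; exact sub_ne_zero.mp h3⟩
      · have hm : min (i, j).1 w.1 = w.1 := by
          apply min_eq_right
          show w.1 ≤ i
          rw [Fin.le_def]; omega
        have e1 := colPartial_succ A j h2
        have e2 := colPartial_succ B j h2
        have he : colPartial A w.1 j - colPartial B w.1 j = t := by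
          rw [ht_def, hs_def, hd_def, e1, e2]; ring
        exact Or.inr ⟨h1.symm, Or.inr h2, by rw [hm]; exact sub_ne_zero.mp (he ▸ h3)⟩
      · have hm : min (i, j).1 w.1 = i := by
          apply min_eq_left
          show i ≤ w.1
          rw [Fin.le_def]; omega
        exact Or.inr ⟨h1.symm, Or.inl h2, by rw [hm]; exact sub_ne_zero.mp h3⟩
  -- value facts
  have hq3 : q = 0 ∨ q = 1 ∨ q = -1 := by
    rcases hA.2.1 i j with h1 | h1 <;> rcases hB.2.1 i j with h2 | h2 <;>
      rw [hq_def, h1, h2] <;> norm_num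
  have hs3 : s = 0 ∨ s = 1 ∨ s = -1 := by
    rcases hA.2.2.1 i j with h1 | h1 <;> rcases hB.2.2.1 i j with h2 | h2 <;>
      rw [hs_def, h1, h2] <;> norm_num
  have hp3 : p = 0 ∨ p = 1 ∨ p = -1 := by
    by_cases hj : (j : ℕ) = 0
    · left
      rw [hp_def, hq_def, hd_def, rowPartial_zero A i hj, rowPartial_zero B i hj]; ring
    · have hlt : (j : ℕ) - 1 < n := by have := j.isLt; omega
      set l : Fin n := ⟨(j : ℕ) - 1, hlt⟩ with hl
      have h2 : (l : ℕ) + 1 = (j : ℕ) := by simp [hl]; omega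
      have hp_eq : p = rowPartial A i l - rowPartial B i l := by
        rw [hp_def, hq_def, hd_def, rowPartial_succ A i h2, rowPartial_succ B i h2]; ring
      rcases hA.2.1 i l with h1 | h1 <;> rcases hB.2.1 i l with h3 | h3 <;>
        rw [hp_eq, h1, h3] <;> norm_num
  have ht3 : t = 0 ∨ t = 1 ∨ t = -1 := by
    by_cases hi : (i : ℕ) = 0
    · left
      rw [ht_def, hs_def, hd_def, colPartial_zero A j hi, colPartial_zero B j hi]; ring
    · have hlt : (i : ℕ) - 1 < n := by have := i.isLt; omega
      set l : Fin n := ⟨(i : ℕ) - 1, hlt⟩ with hl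
      have h2 : (l : ℕ) + 1 = (i : ℕ) := by simp [hl]; omega
      have ht_eq : t = colPartial A l j - colPartial B l j := by
        rw [ht_def, hs_def, hd_def, colPartial_succ A j h2, colPartial_succ B j h2]; ring
      rcases hA.2.2.1 l j with h1 | h1 <;> rcases hB.2.2.1 l j with h3 | h3 <;>
        rw [ht_eq, h1, h3] <;> norm_num
  -- the four candidate sets
  set F1 := Finset.univ.filter (fun w : Fin n × Fin n => w.1 = i ∧ (w.2 : ℕ) + 1 = (j : ℕ) ∧ p ≠ 0) with hF1
  set F2 := Finset.univ.filter (fun w : Fin n × Fin n => w.1 = i ∧ (j : ℕ) + 1 = (w.2 : ℕ) ∧ q ≠ 0) with hF2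
  set F3 := Finset.univ.filter (fun w : Fin n × Fin n => w.2 = j ∧ (w.1 : ℕ) + 1 = (i : ℕ) ∧ t ≠ 0) with hF3
  set F4 := Finset.univ.filter (fun w : Fin n × Fin n => w.2 = j ∧ (i : ℕ) + 1 = (w.1 : ℕ) ∧ s ≠ 0) with hF4
  have hdeg : (ddGraph ({A, B} : Set (Matrix (Fin n) (Fin n) ℝ))).degree (i, j)
      = F1.card + F2.card + F3.card + F4.card := by
    rw [SimpleGraph.degree, SimpleGraph.neighborFinset_eq_filter]
    rw [Finset.filter_congr (fun x _ => (adj_iff x))]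
    simp only [Finset.filter_or]
    have D12 : Disjoint F1 F2 := by
      rw [Finset.disjoint_left]; intro a ha hb
      simp only [hF1, hF2, Finset.mem_filter, Fin.ext_iff] at ha hb; omega
    have D13 : Disjoint F1 F3 := by
      rw [Finset.disjoint_left]; intro a ha hb
      simp only [hF1, hF3, Finset.mem_filter, Fin.ext_iff] at ha hb; omega
    have D14 : Disjoint F1 F4 := by
      rw [Finset.disjoint_left]; intro a ha hb
      simp only [hF1, hF4, Finset.mem_filter, Fin.ext_iff] at ha hb; omega
    have D23 : Disjoint F2 F3 := by
      rw [Finset.disjoint_left]; intro a ha hb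
      simp only [hF2, hF3, Finset.mem_filter, Fin.ext_iff] at ha hb; omega
    have D24 : Disjoint F2 F4 := by
      rw [Finset.disjoint_left]; intro a ha hb
      simp only [hF2, hF4, Finset.mem_filter, Fin.ext_iff] at ha hb; omega
    have D34 : Disjoint F3 F4 := by
      rw [Finset.disjoint_left]; intro a ha hb
      simp only [hF3, hF4, Finset.mem_filter, Fin.ext_iff] at ha hb; omega
    rw [Finset.card_union_of_disjoint (Finset.disjoint_union_right.mpr
        ⟨D12, Finset.disjoint_union_right.mpr ⟨D13, D14⟩⟩),
      Finset.card_union_of_disjoint (Finset.disjoint_union_right.mpr ⟨D23, D24⟩),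
      Finset.card_union_of_disjoint D34]
    ring
  have c1 : F1.card = if p ≠ 0 then 1 else 0 := by
    by_cases hp : p ≠ 0
    · have hj : (j : ℕ) ≠ 0 := by
        intro h0
        exact hp (by rw [hp_def, hq_def, hd_def, rowPartial_zero A i h0, rowPartial_zero B i h0]; ring)
      have hlt : (j : ℕ) - 1 < n := by have := j.isLt; omega
      have : F1 = {(i, ⟨(j : ℕ) - 1, hlt⟩)} := by
        ext w
        simp only [hF1, Finset.mem_filter, Finset.mem_univ, true_and, Finset.mem_singleton,
          Prod.ext_iff, Fin.ext_iff]
        constructor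
        · rintro ⟨h1, h2, -⟩
          exact ⟨h1, by omega⟩
        · rintro ⟨h1, h2⟩
          refine ⟨h1, by omega, hp⟩
      rw [this]
      simp [hp]
    · simp only [hF1]
      rw [if_neg hp, Finset.card_eq_zero, Finset.filter_eq_empty_iff]
      rintro w - ⟨-, -, h3⟩
      exact hp h3
  have c2 : F2.card = if q ≠ 0 then 1 else 0 := by
    by_cases hq : q ≠ 0
    · have hj : (j : ℕ) + 1 ≠ n := by
        intro h0
        exact hq (by rw [hq_def, rowPartial_last A hA i h0, rowPartial_last B hB i h0]; ring)
      have hlt : (j : ℕ) + 1 < n := by have := j.isLt; omega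
      have : F2 = {(i, ⟨(j : ℕ) + 1, hlt⟩)} := by
        ext w
        simp only [hF2, Finset.mem_filter, Finset.mem_univ, true_and, Finset.mem_singleton,
          Prod.ext_iff, Fin.ext_iff]
        constructor
        · rintro ⟨h1, h2, -⟩
          exact ⟨h1, by omega⟩
        · rintro ⟨h1, h2⟩
          refine ⟨h1, by omega, hq⟩
      rw [this]
      simp [hq]
    · simp only [hF2]
      rw [if_neg hq, Finset.card_eq_zero, Finset.filter_eq_empty_iff]
      rintro w - ⟨-, -, h3⟩
      exact hq h3
  have c3 : F3.card = if t ≠ 0 then 1 else 0 := by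
    by_cases ht : t ≠ 0
    · have hi : (i : ℕ) ≠ 0 := by
        intro h0
        exact ht (by rw [ht_def, hs_def, hd_def, colPartial_zero A j h0, colPartial_zero B j h0]; ring)
      have hlt : (i : ℕ) - 1 < n := by have := i.isLt; omega
      have : F3 = {(⟨(i : ℕ) - 1, hlt⟩, j)} := by
        ext w
        simp only [hF3, Finset.mem_filter, Finset.mem_univ, true_and, Finset.mem_singleton,
          Prod.ext_iff, Fin.ext_iff]
        constructor
        · rintro ⟨h1, h2, -⟩
          exact ⟨by omega, h1⟩
        · rintro ⟨h1, h2⟩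
          refine ⟨h2, by omega, ht⟩
      rw [this]
      simp [ht]
    · simp only [hF3]
      rw [if_neg ht, Finset.card_eq_zero, Finset.filter_eq_empty_iff]
      rintro w - ⟨-, -, h3⟩
      exact ht h3
  have c4 : F4.card = if s ≠ 0 then 1 else 0 := by
    by_cases hs : s ≠ 0
    · have hi : (i : ℕ) + 1 ≠ n := by
        intro h0
        exact hs (by rw [hs_def, colPartial_last A hA j h0, colPartial_last B hB j h0]; ring)
      have hlt : (i : ℕ) + 1 < n := by have := i.isLt; omega
      have : F4 = {(⟨(i : ℕ) + 1, hlt⟩, j)} := by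
        ext w
        simp only [hF4, Finset.mem_filter, Finset.mem_univ, true_and, Finset.mem_singleton,
          Prod.ext_iff, Fin.ext_iff]
        constructor
        · rintro ⟨h1, h2, -⟩
          exact ⟨by omega, h1⟩
        · rintro ⟨h1, h2⟩
          refine ⟨h2, by omega, hs⟩
      rw [this]
      simp [hs]
    · simp only [hF4]
      rw [if_neg hs, Finset.card_eq_zero, Finset.filter_eq_empty_iff]
      rintro w - ⟨-, -, h3⟩
      exact hs h3
  rw [hdeg, c1, c2, c3, c4]
  exact parity_aux hp3 hq3 ht3 hs3 (by rw [hp_def, ht_def]; ring)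


/-- every edge of the doubly directed graph of a set of at least two
ASMs is contained in a cycle. -/
theorem edge_in_cycle (n : ℕ) (X : Set (Matrix (Fin n) (Fin n) ℝ))
    (hX : ∀ A ∈ X, IsASM A) (h2 : 2 ≤ X.ncard)
    (v w : Fin n × Fin n) (h : (ddGraph X).Adj v w) :
    ∃ (u : Fin n × Fin n) (p : (ddGraph X).Walk u u),
      p.IsCycle ∧ s(v, w) ∈ p.edges := by
  classical
  have hwit : ∃ A ∈ X, ∃ B ∈ X,
      (ddGraph ({A, B} : Set (Matrix (Fin n) (Fin n) ℝ))).Adj v w := by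
    rcases h with ⟨h1, hh2, A, hAX, B, hBX, h3⟩ | ⟨h1, hh2, A, hAX, B, hBX, h3⟩
    · exact ⟨A, hAX, B, hBX, Or.inl ⟨h1, hh2, A, Or.inl rfl, B, Or.inr rfl, h3⟩⟩
    · exact ⟨A, hAX, B, hBX, Or.inr ⟨h1, hh2, A, Or.inl rfl, B, Or.inr rfl, h3⟩⟩
  obtain ⟨A, hAX, B, hBX, hadj⟩ := hwit
  have hmem : ∀ M ∈ ({A, B} : Set (Matrix (Fin n) (Fin n) ℝ)), M ∈ X := by
    rintro M (rfl | rfl)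
    · exact hAX
    · exact hBX
  have hle : ddGraph ({A, B} : Set (Matrix (Fin n) (Fin n) ℝ)) ≤ ddGraph X := by
    intro a b hab
    rcases hab with ⟨h1, hh2, A', hA', B', hB', h3⟩ | ⟨h1, hh2, A', hA', B', hB', h3⟩
    · exact Or.inl ⟨h1, hh2, A', hmem A' hA', B', hmem B' hB', h3⟩
    · exact Or.inr ⟨h1, hh2, A', hmem A' hA', B', hmem B' hB', h3⟩
  have hreach := reach_del (ddGraph ({A, B} : Set (Matrix (Fin n) (Fin n) ℝ)))
    (fun u => even_degree_pair (hX A hAX) (hX B hBX) u) hadj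
  obtain ⟨u, p, hc, he⟩ :=
    (SimpleGraph.adj_and_reachable_delete_edges_iff_exists_cycle).mp ⟨hadj, hreach⟩
  refine ⟨u, p.mapLe hle, hc.mapLe hle, ?_⟩
  have hedges : (p.mapLe hle).edges = p.edges := by
    simp only [SimpleGraph.Walk.edges_map]
    have : ∀ e : Sym2 (Fin n × Fin n),
        Sym2.map (⇑(SimpleGraph.Hom.ofLE hle)) e = e := by
      intro e
      refine Sym2.ind (fun x y => ?_) e
      rfl
    rw [List.map_congr_left (fun e _ => this e)]
    exact List.map_id p.edges
  rw [hedges]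
  exact he

end ASMPaper
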